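/- Let n ≥ 1, let γ_{2n} be the cyclic permutation (1,2,…,2n) of {1,…,2n}, and let I = I_{2n}. Then there is exactly one permutation π of {1,…,2n} satisfying all of: (a) π is a fixed-point-free involution; (b) #(π) + #(π⁻¹γ_{2n}) = 2n+1; and (c) the subgroup generated by π and I acts transitively on {1,…,2n}. Namely, π is the involution with cycles (1,2n), (2,3), (4,5), …, (2n−2,2n−1). -/

import Mathlib

noncomputable def cycleCount {N : ℕ} (π : Equiv.Perm (Fin N)) : ℕ :=
  Set.ncard {O : Set (Fin N) | ∃ x, O = {y | π.SameCycle x y}}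

noncomputable def cyclesIn {N : ℕ} (π : Equiv.Perm (Fin N)) (C : Set (Fin N)) : ℕ :=
  Set.ncard {O : Set (Fin N) | (∃ x, O = {y | π.SameCycle x y}) ∧ O ⊆ C}

/-- The annular permutation `γ_{p,q}` of `{1,…,p+q}` (0-indexed as `Fin (p+q)`),
with the two cycles `(1,…,p)` and `(p+1,…,p+q)`. -/
def annularGamma (p q : ℕ) : Equiv.Perm (Fin (p + q)) :=
  finSumFinEquiv.permCongr ((finRotate p).sumCongr (finRotate q))

/-- The interval involution `I_N = (1 2)(3 4)⋯(N-1 N)` of `{1,…,N}`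
(0-indexed: swaps `2i ↔ 2i+1`), for `N` even. -/
def intervalInvolution (N : ℕ) : Equiv.Perm (Fin N) :=
  Function.Involutive.toPerm
    (fun x => ⟨if x.val % 2 = 0 then min (x.val + 1) (N - 1) else x.val - 1, by
      rcases x with ⟨v, hv⟩
      dsimp only
      split <;> omega⟩)
    (by
      intro x
      rcases x with ⟨v, hv⟩
      apply Fin.ext
      dsimp only
      split_ifs <;> omega)

/-- The subgroup generated by `π` and `ρ` acts transitively on `Fin N`. -/
def JointTrans {N : ℕ} (π ρ : Equiv.Perm (Fin N)) : Prop :=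
  ∀ x y : Fin N, ∃ g ∈ Subgroup.closure ({π, ρ} : Set (Equiv.Perm (Fin N))), g x = y

/-- `α` separates even numbers: no cycle of `α` contains two distinct even numbers
(an element `x : Fin N` represents the number `x.val + 1`). -/
def SeparatesEven {N : ℕ} (α : Equiv.Perm (Fin N)) : Prop :=
  ∀ x y : Fin N, α.SameCycle x y → (x.val + 1) % 2 = 0 → (y.val + 1) % 2 = 0 → x = y

/-- `π ∈ S_NC(p,q)`: annular non-crossing permutations. -/
def AnnularNC (p q : ℕ) (π : Equiv.Perm (Fin (p + q))) : Prop :=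
  JointTrans π (annularGamma p q) ∧
    cycleCount π + cycleCount (π⁻¹ * annularGamma p q) = p + q

/-- `A` witnesses bipartiteness of the graph `G_π`: `π(A) = A` and for each `i`,
exactly one of the (1-indexed) numbers `2i-1`, `2i` belongs to `A`. -/
def BipartSet {N : ℕ} (π : Equiv.Perm (Fin N)) (A : Set (Fin N)) : Prop :=
  (⇑π) '' A = A ∧ ∀ i : ℕ, ∀ h : 2 * i + 1 < N,
    Xor' ((⟨2 * i, Nat.lt_of_succ_lt h⟩ : Fin N) ∈ A) ((⟨2 * i + 1, h⟩ : Fin N) ∈ A)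

/-- The graph `G_π` is bipartite. -/
def GraphBipartite {N : ℕ} (π : Equiv.Perm (Fin N)) : Prop :=
  ∃ A : Set (Fin N), BipartSet π A

/-- `π ∈ J_{2n,2m}`: annular non-crossing, bipartite graph, and `π⁻¹γ` separates even. -/
def memJ (n m : ℕ) (π : Equiv.Perm (Fin (2 * n + 2 * m))) : Prop :=
  AnnularNC (2 * n) (2 * m) π ∧ GraphBipartite π ∧
    SeparatesEven (π⁻¹ * annularGamma (2 * n) (2 * m))


open Equiv Equiv.Perm

namespace Aux

variable {N : ℕ}

def orbSet (f : Perm (Fin N)) (x : Fin N) : Set (Fin N) := {y | f.SameCycle x y}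

lemma cycleCount_eq (f : Perm (Fin N)) :
    cycleCount f = Set.ncard {O : Set (Fin N) | ∃ x, O = orbSet f x} := rfl

lemma mem_orbSet_self (f : Perm (Fin N)) (x : Fin N) : x ∈ orbSet f x := SameCycle.refl f x

lemma orbSet_eq {f : Perm (Fin N)} {x y : Fin N} (h : f.SameCycle x y) :
    orbSet f x = orbSet f y := by
  ext z; exact ⟨fun hz => h.symm.trans hz, fun hz => h.trans hz⟩

lemma sameCycle_exists_pow {f : Perm (Fin N)} {x y : Fin N} (h : f.SameCycle x y) :
    ∃ k : ℕ, (f ^ k) x = y := by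
  obtain ⟨i, _, hi⟩ := h.exists_pow_eq'
  exact ⟨i, hi⟩

lemma orb_closed {f : Perm (Fin N)} {S : Set (Fin N)} (hS : ∀ z ∈ S, f z ∈ S) {x y : Fin N}
    (hx : x ∈ S) (h : f.SameCycle x y) : y ∈ S := by
  obtain ⟨k, rfl⟩ := sameCycle_exists_pow h
  clear h
  induction k with
  | zero => simpa using hx
  | succ m ih =>
      rw [pow_succ', Perm.mul_apply]
      exact hS _ ih

lemma mem_of_apply_mem {f : Perm (Fin N)} {S : Set (Fin N)} (hS : ∀ z ∈ S, f z ∈ S)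
    {z : Fin N} (hz : f z ∈ S) : z ∈ S := by
  have h1 : (⇑f) '' S ⊆ S := by rintro _ ⟨w, hw, rfl⟩; exact hS w hw
  have h2 : ((⇑f) '' S).ncard = S.ncard := Set.ncard_image_of_injective S f.injective
  have h3 : (⇑f) '' S = S := Set.eq_of_subset_of_ncard_le h1 (le_of_eq h2.symm) (Set.toFinite S)
  rw [← h3] at hz
  obtain ⟨w, hw, hwz⟩ := hz
  rwa [← f.injective hwz]

lemma agree_orb {f g : Perm (Fin N)} {S : Set (Fin N)} (hS : ∀ z ∈ S, f z ∈ S)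
    (hag : ∀ z ∈ S, g z = f z) {x : Fin N} (hx : x ∈ S) : orbSet f x ⊆ orbSet g x := by
  intro y hy
  obtain ⟨k, rfl⟩ := sameCycle_exists_pow hy
  have key : ∀ m : ℕ, (g ^ m) x = (f ^ m) x ∧ (f ^ m) x ∈ S := by
    intro m
    induction m with
    | zero => simpa using hx
    | succ m ih =>
        rw [pow_succ', pow_succ', Perm.mul_apply, Perm.mul_apply, ih.1]
        exact ⟨hag _ ih.2, hS _ ih.2⟩
  exact ⟨(k : ℤ), by rw [zpow_natCast]; exact (key k).1⟩

lemma agree_orbSet_eq {f g : Perm (Fin N)} {S : Set (Fin N)} (hS : ∀ z ∈ S, f z ∈ S)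
    (hag : ∀ z ∈ S, g z = f z) {x : Fin N} (hx : x ∈ S) : orbSet f x = orbSet g x := by
  have hS' : ∀ z ∈ S, g z ∈ S := fun z hz => (hag z hz).symm ▸ hS z hz
  have hag' : ∀ z ∈ S, f z = g z := fun z hz => (hag z hz).symm
  exact subset_antisymm (agree_orb hS hag hx) (agree_orb hS' hag' hx)

lemma cycleCount_swap_mul (f : Perm (Fin N)) {a b : Fin N} (hab : a ≠ b) :
    cycleCount (swap a b * f) ≤ cycleCount f + 1 ∧
      (¬ f.SameCycle a b → cycleCount (swap a b * f) ≤ cycleCount f) := by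
  set g := swap a b * f with hg
  have hgz : ∀ z, g z = swap a b (f z) := fun z => rfl
  set U : Set (Fin N) := orbSet f a ∪ orbSet f b with hU
  have hUf : ∀ z ∈ U, f z ∈ U := by
    rintro z (hz | hz)
    · exact Or.inl (hz.apply_right)
    · exact Or.inr (hz.apply_right)
  have haU : a ∈ U := Or.inl (mem_orbSet_self f a)
  have hbU : b ∈ U := Or.inr (mem_orbSet_self f b)
  have hswapU : ∀ z ∈ U, swap a b z ∈ U := by
    intro z hz
    rcases eq_or_ne z a with rfl | h1
    · rwa [swap_apply_left]
    rcases eq_or_ne z b with rfl | h2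
    · rwa [swap_apply_right]
    · rwa [swap_apply_of_ne_of_ne h1 h2]
  have hUg : ∀ z ∈ U, g z ∈ U := fun z hz => by
    rw [hgz]; exact hswapU _ (hUf z hz)
  have hcompf : ∀ z ∈ Uᶜ, f z ∈ Uᶜ := by
    intro z hz hmem
    exact hz (mem_of_apply_mem hUf hmem)
  have hag : ∀ z ∈ Uᶜ, g z = f z := by
    intro z hz
    have h1 : f z ∈ Uᶜ := hcompf z hz
    rw [hgz, swap_apply_of_ne_of_ne (fun h => h1 (by rw [h]; exact haU)) (fun h => h1 (by rw [h]; exact hbU))]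
  -- U is the union of g-orbits of a and b
  have hfg : ∀ z, f z = swap a b (g z) := by
    intro z; rw [hgz, swap_apply_self]
  have hUga : U = orbSet g a ∪ orbSet g b := by
    apply subset_antisymm
    · set V : Set (Fin N) := orbSet g a ∪ orbSet g b with hV
      have haV : a ∈ V := Or.inl (mem_orbSet_self g a)
      have hbV : b ∈ V := Or.inr (mem_orbSet_self g b)
      have hVg : ∀ z ∈ V, g z ∈ V := by
        rintro z (hz | hz)
        · exact Or.inl (hz.apply_right)
        · exact Or.inr (hz.apply_right)
      have hVf : ∀ z ∈ V, f z ∈ V := by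
        intro z hz
        rw [hfg]
        rcases eq_or_ne (g z) a with h1 | h1
        · rw [h1, swap_apply_left]; exact hbV
        rcases eq_or_ne (g z) b with h2 | h2
        · rw [h2, swap_apply_right]; exact haV
        · rw [swap_apply_of_ne_of_ne h1 h2]; exact hVg z hz
      rintro z (hz | hz)
      · exact orb_closed hVf haV hz
      · exact orb_closed hVf hbV hz
    · rintro z (hz | hz)
      · exact orb_closed hUg haU hz
      · exact orb_closed hUg hbU hz
  have hXeq : ∀ x ∈ Uᶜ, orbSet f x = orbSet g x := fun x hx => agree_orbSet_eq hcompf hag hx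
  -- decomposition of the orbit-set families
  have hdecf : {O : Set (Fin N) | ∃ x, O = orbSet f x} =
      (orbSet f '' Uᶜ) ∪ {orbSet f a, orbSet f b} := by
    ext O
    constructor
    · rintro ⟨x, rfl⟩
      by_cases hx : x ∈ U
      · rcases hx with hx | hx
        · exact Or.inr (Or.inl (orbSet_eq hx.symm))
        · exact Or.inr (Or.inr (orbSet_eq hx.symm))
      · exact Or.inl ⟨x, hx, rfl⟩
    · rintro (⟨x, _, rfl⟩ | (h | h))
      · exact ⟨x, rfl⟩
      · exact ⟨a, h⟩
      · exact ⟨b, h⟩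
  have hdecg : {O : Set (Fin N) | ∃ x, O = orbSet g x} =
      (orbSet g '' Uᶜ) ∪ {orbSet g a, orbSet g b} := by
    ext O
    constructor
    · rintro ⟨x, rfl⟩
      by_cases hx : x ∈ U
      · rw [hUga] at hx
        rcases hx with hx | hx
        · exact Or.inr (Or.inl (orbSet_eq hx.symm))
        · exact Or.inr (Or.inr (orbSet_eq hx.symm))
      · exact Or.inl ⟨x, hx, rfl⟩
    · rintro (⟨x, _, rfl⟩ | (h | h))
      · exact ⟨x, rfl⟩
      · exact ⟨a, h⟩
      · exact ⟨b, h⟩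
  have himeq : orbSet f '' Uᶜ = orbSet g '' Uᶜ := Set.image_congr hXeq
  -- disjointness
  have hdisf : Disjoint (orbSet f '' Uᶜ) ({orbSet f a, orbSet f b} : Set (Set (Fin N))) := by
    rw [Set.disjoint_left]
    rintro O ⟨x, hx, rfl⟩ (h | h)
    · have : a ∈ orbSet f x := by rw [h]; exact mem_orbSet_self f a
      exact hx (Or.inl this.symm)
    · have : b ∈ orbSet f x := by rw [h]; exact mem_orbSet_self f b
      exact hx (Or.inr this.symm)
  have hdisg : Disjoint (orbSet g '' Uᶜ) ({orbSet g a, orbSet g b} : Set (Set (Fin N))) := by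
    rw [Set.disjoint_left]
    rintro O ⟨x, hx, rfl⟩ (h | h)
    · have : a ∈ orbSet g x := by rw [h]; exact mem_orbSet_self g a
      refine hx ?_
      rw [hUga]; exact Or.inl this.symm
    · have : b ∈ orbSet g x := by rw [h]; exact mem_orbSet_self g b
      refine hx ?_
      rw [hUga]; exact Or.inr this.symm
  have hccf : cycleCount f = (orbSet f '' Uᶜ).ncard + ({orbSet f a, orbSet f b} : Set (Set (Fin N))).ncard := by
    rw [cycleCount_eq, hdecf, Set.ncard_union_eq hdisf (Set.toFinite _) (Set.toFinite _)]
  have hccg : cycleCount g = (orbSet f '' Uᶜ).ncard + ({orbSet g a, orbSet g b} : Set (Set (Fin N))).ncard := by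
    rw [cycleCount_eq, hdecg, Set.ncard_union_eq hdisg (Set.toFinite _) (Set.toFinite _), himeq]
  have hple : ({orbSet g a, orbSet g b} : Set (Set (Fin N))).ncard ≤ 2 := by
    refine le_trans (Set.ncard_insert_le _ _) ?_
    simp [Set.ncard_singleton]
  have hppos : 1 ≤ ({orbSet f a, orbSet f b} : Set (Set (Fin N))).ncard := by
    rw [Nat.one_le_iff_ne_zero, Ne, Set.ncard_eq_zero (Set.toFinite _)]
    intro h
    have := h ▸ (Set.mem_insert (orbSet f a) {orbSet f b})
    exact this
  constructor
  · omega
  · intro hnsc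
    have hAB : orbSet f a ≠ orbSet f b := by
      intro h
      have : b ∈ orbSet f a := by rw [h]; exact mem_orbSet_self f b
      exact hnsc this
    have : ({orbSet f a, orbSet f b} : Set (Set (Fin N))).ncard = 2 := Set.ncard_pair hAB
    omega

-- involution cycle count
lemma cycleCount_involution (f : Perm (Fin N)) (hinv : ∀ x, f (f x) = x)
    (hfp : ∀ x, f x ≠ x) : 2 * cycleCount f = N := by
  classical
  have horb : ∀ x, orbSet f x = ({x, f x} : Set (Fin N)) := by
    intro x
    apply subset_antisymm
    · intro y hy
      refine orb_closed (S := ({x, f x} : Set (Fin N))) ?_ (Or.inl rfl) hy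
      rintro z (rfl | hz)
      · exact Or.inr rfl
      · rw [Set.mem_singleton_iff] at hz
        rw [hz, hinv]
        exact Or.inl rfl
    · rintro y (rfl | hy)
      · exact mem_orbSet_self f y
      · rw [Set.mem_singleton_iff] at hy
        rw [hy]
        exact (SameCycle.refl f x).apply_right
  set pairF : Fin N → Finset (Fin N) := fun x => {x, f x} with hpairF
  have hcoe : ∀ x, orbSet f x = (↑(pairF x) : Set (Fin N)) := by
    intro x
    rw [horb, hpairF]
    simp
  have hcc : cycleCount f = (Finset.image pairF Finset.univ).card := by
    rw [cycleCount_eq]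
    have h1 : {O : Set (Fin N) | ∃ x, O = orbSet f x} =
        (fun s : Finset (Fin N) => (↑s : Set (Fin N))) '' (↑(Finset.image pairF Finset.univ) : Set (Finset (Fin N))) := by
      ext O
      simp only [Set.mem_setOf_eq, Set.mem_image, Finset.coe_image, Set.mem_image,
        Finset.mem_coe, Finset.mem_univ]
      constructor
      · rintro ⟨x, rfl⟩
        exact ⟨pairF x, ⟨x, trivial, rfl⟩, (hcoe x).symm⟩
      · rintro ⟨s, ⟨x, _, rfl⟩, rfl⟩
        exact ⟨x, (hcoe x).symm⟩
    rw [h1, Set.ncard_image_of_injective _ Finset.coe_injective, Set.ncard_coe_finset]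
  have hcard : (Finset.univ : Finset (Fin N)).card =
      ∑ b ∈ Finset.image pairF Finset.univ,
        (Finset.filter (fun a => pairF a = b) Finset.univ).card :=
    Finset.card_eq_sum_card_image pairF Finset.univ
  have hfib : ∀ b ∈ Finset.image pairF Finset.univ,
      (Finset.filter (fun a => pairF a = b) Finset.univ).card = 2 := by
    rintro b hb
    obtain ⟨x, _, rfl⟩ := Finset.mem_image.mp hb
    have hxfx : x ≠ f x := fun h => hfp x h.symm
    have hfilter : Finset.filter (fun a => pairF a = pairF x) Finset.univ = {x, f x} := by
      ext a
      simp only [Finset.mem_filter, Finset.mem_univ, true_and, Finset.mem_insert,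
        Finset.mem_singleton]
      constructor
      · intro h
        have : a ∈ pairF a := Finset.mem_insert_self _ _
        rw [h] at this
        rw [hpairF] at this
        simpa using this
      · rintro (rfl | rfl)
        · rfl
        · show pairF (f x) = pairF x
          rw [hpairF]
          simp only []
          rw [hinv, Finset.pair_comm]
    rw [hfilter, Finset.card_insert_of_notMem (by simpa using hxfx), Finset.card_singleton]
  rw [Finset.sum_congr rfl hfib, Finset.sum_const, smul_eq_mul] at hcard
  have huniv : (Finset.univ : Finset (Fin N)).card = N := by simp
  omega

-- cycleCount ≤ 2 criterion
lemma cycleCount_le_two (f : Perm (Fin N)) (a b : Fin N)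
    (h : ∀ z, f.SameCycle a z ∨ f.SameCycle b z) : cycleCount f ≤ 2 := by
  have hsub : {O : Set (Fin N) | ∃ x, O = orbSet f x} ⊆ {orbSet f a, orbSet f b} := by
    rintro O ⟨x, rfl⟩
    rcases h x with hx | hx
    · exact Or.inl (orbSet_eq hx).symm
    · exact Or.inr (orbSet_eq hx).symm
  refine le_trans (Set.ncard_le_ncard hsub (Set.toFinite _)) ?_
  refine le_trans (Set.ncard_insert_le _ _) ?_
  simp [Set.ncard_singleton]

-- modular reduction helper
lemma modred {m M : ℕ} (h : m < 2 * M) (hM : 0 < M) : m % M = if m < M then m else m - M := by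
  split
  · exact Nat.mod_eq_of_lt ‹_›
  · have h2 : m - M < M := by omega
    rw [Nat.mod_eq_sub_mod (by omega), Nat.mod_eq_of_lt h2]

variable [NeZero N]

open Fin.NatCast

def adv (a : Fin N) (j : ℕ) : Fin N := a + (j : Fin N)

lemma val_adv (a : Fin N) {j : ℕ} (hj : j < N) :
    (adv a j).val = if a.val + j < N then a.val + j else a.val + j - N := by
  have hN : 0 < N := a.pos
  show ((a + (j : Fin N)).val) = _
  rw [Fin.val_add, Fin.val_natCast, Nat.mod_eq_of_lt hj, modred (by omega) hN]

def ofs (a b : Fin N) : ℕ := if a.val ≤ b.val then b.val - a.val else b.val + N - a.val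

lemma ofs_lt (a b : Fin N) : ofs a b < N := by
  have h1 := a.isLt; have h2 := b.isLt
  unfold ofs; split <;> omega

lemma ofs_self (a : Fin N) : ofs a a = 0 := by unfold ofs; simp

lemma ofs_pos {a b : Fin N} (h : a ≠ b) : 0 < ofs a b := by
  have h1 := a.isLt; have h2 := b.isLt
  have h3 : a.val ≠ b.val := fun hh => h (Fin.ext hh)
  unfold ofs; split <;> omega

lemma adv_ofs (a b : Fin N) : adv a (ofs a b) = b := by
  have h1 := a.isLt; have h2 := b.isLt
  apply Fin.ext
  rw [val_adv a (ofs_lt a b)]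
  unfold ofs
  split_ifs <;> omega

lemma ofs_adv (a : Fin N) {j : ℕ} (hj : j < N) : ofs a (adv a j) = j := by
  have h1 := a.isLt
  unfold ofs
  rw [val_adv a hj]
  split_ifs <;> omega

lemma ofs_sum {a b : Fin N} (h : a ≠ b) : ofs a b + ofs b a = N := by
  have h1 := a.isLt; have h2 := b.isLt
  have h3 : a.val ≠ b.val := fun hh => h (Fin.ext hh)
  unfold ofs; split_ifs <;> omega

lemma adv_adv (a : Fin N) (u w : ℕ) : adv (adv a u) w = adv a (u + w) := by
  unfold adv
  rw [Nat.cast_add, add_assoc]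

lemma adv_N (a : Fin N) : adv a N = a := by
  unfold adv
  simp

lemma ofs_adv_adv_le (a : Fin N) {u v : ℕ} (huv : u ≤ v) (hv : v < N) :
    ofs (adv a u) (adv a v) = v - u := by
  have h1 := a.isLt
  unfold ofs
  rw [val_adv a hv, val_adv a (lt_of_le_of_lt huv hv)]
  split_ifs <;> omega

lemma val_adv_parity (hN2 : 2 ∣ N) (a : Fin N) {j : ℕ} (hj : j < N) :
    (adv a j).val % 2 = (a.val + j) % 2 := by
  rw [val_adv a hj]
  split <;> omega

lemma gamma_adv (z : Fin N) : finRotate N z = adv z 1 := by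
  obtain ⟨m, rfl⟩ : ∃ m, N = m + 1 := ⟨N - 1, (Nat.succ_pred_eq_of_pos (NeZero.pos N)).symm⟩
  rw [finRotate_succ_apply]
  unfold adv
  norm_num

lemma sameCycle_step {f : Perm (Fin N)} {x y z : Fin N} (h : f.SameCycle x y)
    (hz : f y = z) : f.SameCycle x z :=
  h.trans ⟨1, by simpa using hz⟩

lemma arc_same {a b : Fin N} (hab : a ≠ b) {j : ℕ} (hj : j < ofs a b) :
    (swap a b * finRotate N).SameCycle a (adv a j) := by
  induction j with
  | zero =>
      have : adv a 0 = a := by unfold adv; simp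
      rw [this]
  | succ m ih =>
      have hm : m < ofs a b := by omega
      have hjN : m + 1 < N := lt_trans hj (ofs_lt a b)
      have hne1 : adv a (m + 1) ≠ a := by
        intro h
        have h1 := ofs_adv a hjN
        rw [h, ofs_self] at h1
        omega
      have hne2 : adv a (m + 1) ≠ b := by
        intro h
        have h1 := ofs_adv a hjN
        rw [h] at h1
        omega
      have h1 : (swap a b * finRotate N) (adv a m) = adv a (m + 1) := by
        rw [Perm.mul_apply, gamma_adv, adv_adv, swap_apply_of_ne_of_ne hne1 hne2]
      exact sameCycle_step (ih hm) h1

lemma arc_not_same {a b : Fin N} (hab : a ≠ b) :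
    ¬ (swap a b * finRotate N).SameCycle a b := by
  intro h
  set A : Set (Fin N) := {z | ofs a z < ofs a b} with hA
  have haA : a ∈ A := by
    show ofs a a < ofs a b
    rw [ofs_self]
    exact ofs_pos hab
  have hclosed : ∀ z ∈ A, (swap a b * finRotate N) z ∈ A := by
    intro z hz
    have hj : ofs a z < ofs a b := hz
    have hzadv : z = adv a (ofs a z) := (adv_ofs a z).symm
    have hjN : ofs a z + 1 < N := by have := ofs_lt a b; omega
    have hγ : finRotate N z = adv a (ofs a z + 1) := by
      rw [gamma_adv]
      conv_lhs => rw [hzadv]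
      rw [adv_adv]
    rcases eq_or_lt_of_le (show ofs a z + 1 ≤ ofs a b from hj) with heq | hlt
    · have hb : finRotate N z = b := by
        rw [hγ, heq, adv_ofs]
      rw [Perm.mul_apply, hb, swap_apply_right]
      exact haA
    · have hne1 : adv a (ofs a z + 1) ≠ a := by
        intro h
        have h1 := ofs_adv a hjN
        rw [h, ofs_self] at h1
        omega
      have hne2 : adv a (ofs a z + 1) ≠ b := by
        intro h
        have h1 := ofs_adv a hjN
        rw [h] at h1
        omega
      rw [Perm.mul_apply, hγ, swap_apply_of_ne_of_ne hne1 hne2]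
      show ofs a (adv a (ofs a z + 1)) < ofs a b
      rw [ofs_adv a hjN]
      exact hlt
  have : b ∈ A := orb_closed hclosed haA h
  have hb : ofs a b < ofs a b := this
  omega

lemma arc_cover {a b : Fin N} (hab : a ≠ b) (z : Fin N) :
    (swap a b * finRotate N).SameCycle a z ∨ (swap a b * finRotate N).SameCycle b z := by
  by_cases h : ofs a z < ofs a b
  · left
    have := arc_same hab h
    rwa [adv_ofs] at this
  · right
    have h1 : ofs b z = ofs a z - ofs a b := by
      conv_lhs => rw [← adv_ofs a b, ← adv_ofs a z]
      exact ofs_adv_adv_le a (le_of_not_gt h) (ofs_lt a z)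
    have h2 := ofs_sum hab
    have h3 := ofs_lt a z
    have hlt : ofs b z < ofs b a := by omega
    have h4 := arc_same hab.symm hlt
    rw [adv_ofs] at h4
    rwa [Equiv.swap_comm a b]

lemma cycleCount_invol_mul (m : ℕ) : ∀ (ρ σ : Perm (Fin N)), (∀ x, ρ (ρ x) = x) →
    ρ.support.card ≤ 2 * m → cycleCount (ρ * σ) ≤ cycleCount σ + m := by
  induction m with
  | zero =>
      intro ρ σ hinv hcard
      have hρ : ρ = 1 := by
        rw [← Equiv.Perm.support_eq_empty_iff, ← Finset.card_eq_zero]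
        omega
      simp [hρ]
  | succ m ih =>
      intro ρ σ hinv hcard
      by_cases hρ : ρ = 1
      · rw [hρ, one_mul]; omega
      · obtain ⟨u, hu⟩ : ∃ u, ρ u ≠ u := by
          by_contra h
          push_neg at h
          exact hρ (Equiv.ext h)
        set v := ρ u with hv
        have hvu : ρ v = u := hinv u
        have huv : u ≠ v := Ne.symm hu
        set ρ₂ := swap u v * ρ with hρ₂
        have hρ₂app : ∀ x, ρ₂ x = swap u v (ρ x) := fun x => rfl
        have hfixu : ρ₂ u = u := by rw [hρ₂app, ← hv, swap_apply_right]
        have hfixv : ρ₂ v = v := by rw [hρ₂app, hvu, swap_apply_left]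
        have hgen : ∀ x, x ≠ u → x ≠ v → ρ₂ x = ρ x ∧ ρ x ≠ u ∧ ρ x ≠ v := by
          intro x hxu hxv
          have h1 : ρ x ≠ u := fun h => hxv (by rw [← hinv x, h, ← hv])
          have h2 : ρ x ≠ v := fun h => hxu (by rw [← hinv x, h, hvu])
          exact ⟨by rw [hρ₂app, swap_apply_of_ne_of_ne h1 h2], h1, h2⟩
        have hρ₂inv : ∀ x, ρ₂ (ρ₂ x) = x := by
          intro x
          rcases eq_or_ne x u with rfl | hxu
          · rw [hfixu, hfixu]
          rcases eq_or_ne x v with rfl | hxv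
          · rw [hfixv, hfixv]
          obtain ⟨h1, h2, h3⟩ := hgen x hxu hxv
          rw [h1]
          obtain ⟨h4, _, _⟩ := hgen (ρ x) h2 h3
          rw [h4, hinv]
        have hsupp : ρ₂.support ⊆ (ρ.support.erase u).erase v := by
          intro z hz
          rw [Equiv.Perm.mem_support] at hz
          have hzu : z ≠ u := fun h => hz (by rw [h, hfixu])
          have hzv : z ≠ v := fun h => hz (by rw [h, hfixv])
          obtain ⟨h1, _, _⟩ := hgen z hzu hzv
          have hzs : ρ z ≠ z := fun h => hz (by rw [h1, h])
          rw [Finset.mem_erase, Finset.mem_erase, Equiv.Perm.mem_support]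
          exact ⟨hzv, hzu, hzs⟩
        have husupp : u ∈ ρ.support := Equiv.Perm.mem_support.mpr hu
        have hvsupp : v ∈ ρ.support.erase u := by
          rw [Finset.mem_erase]
          exact ⟨huv.symm, Equiv.Perm.mem_support.mpr (by rw [hvu]; exact Ne.symm hu)⟩
        have hcard2 : ρ₂.support.card ≤ 2 * m := by
          have h1 := Finset.card_le_card hsupp
          rw [Finset.card_erase_of_mem hvsupp, Finset.card_erase_of_mem husupp] at h1
          omega
        have hfact : ρ * σ = swap u v * (ρ₂ * σ) := by
          rw [hρ₂, ← mul_assoc, ← mul_assoc, Equiv.swap_mul_self, one_mul]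
        rw [hfact]
        calc cycleCount (swap u v * (ρ₂ * σ)) ≤ cycleCount (ρ₂ * σ) + 1 :=
              (cycleCount_swap_mul _ huv).1
          _ ≤ cycleCount σ + m + 1 := by
              have := ih ρ₂ σ hρ₂inv hcard2
              omega
          _ = cycleCount σ + (m + 1) := by omega

lemma cross_bound {π : Perm (Fin N)} {n : ℕ} (hN : N = 2 * n) (hn : 2 ≤ n)
    (hinv : ∀ x, π (π x) = x) (hfp : ∀ x, π x ≠ x) {a c : Fin N}
    (hc1 : 0 < ofs a c) (hc2 : ofs a c < ofs a (π a))
    (hd2 : ¬ (0 < ofs a (π c) ∧ ofs a (π c) < ofs a (π a))) :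
    cycleCount (π * finRotate N) ≤ n := by
  set b := π a with hb
  set d := π c with hd
  have hab : a ≠ b := Ne.symm (hfp a)
  have hcd : c ≠ d := Ne.symm (hfp c)
  have hca : c ≠ a := by
    intro h
    rw [h, ofs_self] at hc1
    omega
  have hcb : c ≠ b := by
    intro h
    rw [h] at hc2
    omega
  have hda : d ≠ a := by
    intro h
    have : π d = π a := by rw [h]
    rw [hd, hinv] at this
    exact hcb this
  have hdb : d ≠ b := by
    intro h
    have : π d = π b := by rw [h]
    rw [hd, hinv, hb, hinv] at this
    exact hca this
  have hdc : d ≠ c := Ne.symm hcd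
  have hdpos : 0 < ofs a d := ofs_pos (Ne.symm hda)
  have hdge : ofs a b ≤ ofs a d := by
    by_contra h
    exact hd2 ⟨hdpos, by omega⟩
  have hdgt : ofs a b < ofs a d := by
    rcases eq_or_lt_of_le hdge with h | h
    · exfalso
      apply hdb
      rw [← adv_ofs a d, ← h, adv_ofs]
    · exact h
  set γ := finRotate N with hγ
  set s1 := swap a b * γ with hs1
  have hsc_ac : s1.SameCycle a c := by
    have := arc_same hab hc2
    rwa [adv_ofs] at this
  have hsc_bd : s1.SameCycle b d := by
    have h1 : ofs b d = ofs a d - ofs a b := by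
      conv_lhs => rw [← adv_ofs a b, ← adv_ofs a d]
      exact ofs_adv_adv_le a hdge (ofs_lt a d)
    have h2 := ofs_sum hab
    have h3 := ofs_lt a d
    have hlt : ofs b d < ofs b a := by omega
    have h4 := arc_same hab.symm hlt
    rw [adv_ofs] at h4
    rw [hs1, Equiv.swap_comm a b]
    exact h4
  have hns : ¬ s1.SameCycle c d := by
    intro h
    exact arc_not_same hab ((hsc_ac.trans h).trans hsc_bd.symm)
  set ρ := π * swap a b * swap c d with hρ
  have hρapp : ∀ z, ρ z = π (swap a b (swap c d z)) := fun z => rfl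
  have hρa : ρ a = a := by
    rw [hρapp, swap_apply_of_ne_of_ne hca.symm hda.symm, swap_apply_left, hb, hinv]
  have hρb : ρ b = b := by
    rw [hρapp, swap_apply_of_ne_of_ne hcb.symm hdb.symm, swap_apply_right, ← hb]
  have hρc : ρ c = c := by
    rw [hρapp, swap_apply_left, swap_apply_of_ne_of_ne hda hdb, hd, hinv]
  have hρd : ρ d = d := by
    rw [hρapp, swap_apply_right, swap_apply_of_ne_of_ne hca hcb, ← hd]
  have hρgen : ∀ z, z ≠ a → z ≠ b → z ≠ c → z ≠ d → ρ z = π z := by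
    intro z h1 h2 h3 h4
    rw [hρapp, swap_apply_of_ne_of_ne h3 h4, swap_apply_of_ne_of_ne h1 h2]
  have hπquad : ∀ z, z ≠ a → z ≠ b → z ≠ c → z ≠ d →
      (π z ≠ a ∧ π z ≠ b ∧ π z ≠ c ∧ π z ≠ d) := by
    intro z h1 h2 h3 h4
    refine ⟨fun h => h2 ?_, fun h => h1 ?_, fun h => h4 ?_, fun h => h3 ?_⟩
    · rw [← hinv z, h, ← hb]
    · rw [← hinv z, h, hb, hinv]
    · rw [← hinv z, h, ← hd]
    · rw [← hinv z, h, hd, hinv]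
  have hρinv : ∀ z, ρ (ρ z) = z := by
    intro z
    rcases eq_or_ne z a with rfl | h1
    · rw [hρa, hρa]
    rcases eq_or_ne z b with rfl | h2
    · rw [hρb, hρb]
    rcases eq_or_ne z c with rfl | h3
    · rw [hρc, hρc]
    rcases eq_or_ne z d with rfl | h4
    · rw [hρd, hρd]
    obtain ⟨g1, g2, g3, g4⟩ := hπquad z h1 h2 h3 h4
    rw [hρgen z h1 h2 h3 h4, hρgen (π z) g1 g2 g3 g4, hinv]
  have hsupp : ρ.support.card ≤ 2 * (n - 2) := by
    have hsub : ρ.support ⊆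
        ((((Finset.univ : Finset (Fin N)).erase a).erase b).erase c).erase d := by
      intro z hz
      rw [Equiv.Perm.mem_support] at hz
      have h1 : z ≠ a := fun h => hz (by rw [h, hρa])
      have h2 : z ≠ b := fun h => hz (by rw [h, hρb])
      have h3 : z ≠ c := fun h => hz (by rw [h, hρc])
      have h4 : z ≠ d := fun h => hz (by rw [h, hρd])
      simp only [Finset.mem_erase, Finset.mem_univ, and_true]
      exact ⟨h4, h3, h2, h1⟩
    have h1 := Finset.card_le_card hsub
    have hmem1 : b ∈ (Finset.univ : Finset (Fin N)).erase a := by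
      simp [Finset.mem_erase, hab.symm]
    have hmem2 : c ∈ ((Finset.univ : Finset (Fin N)).erase a).erase b := by
      simp [Finset.mem_erase, hca, hcb]
    have hmem3 : d ∈ (((Finset.univ : Finset (Fin N)).erase a).erase b).erase c := by
      simp [Finset.mem_erase, hda, hdb, hdc]
    rw [Finset.card_erase_of_mem hmem3, Finset.card_erase_of_mem hmem2,
      Finset.card_erase_of_mem hmem1, Finset.card_erase_of_mem (Finset.mem_univ a),
      Finset.card_univ, Fintype.card_fin] at h1
    omega
  have h1 : cycleCount s1 ≤ 2 := cycleCount_le_two s1 a b (arc_cover hab)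
  have h2 : cycleCount (swap c d * s1) ≤ cycleCount s1 :=
    (cycleCount_swap_mul s1 hcd).2 hns
  have h3 : cycleCount (ρ * (swap c d * s1)) ≤ cycleCount (swap c d * s1) + (n - 2) :=
    cycleCount_invol_mul (n - 2) ρ _ hρinv hsupp
  have hfact : π * γ = ρ * (swap c d * s1) := by
    rw [hρ, hs1]
    ext z
    simp only [Perm.mul_apply, swap_apply_self]
  rw [hfact]
  omega

lemma I_val (x : Fin N) : (intervalInvolution N x).val =
    if x.val % 2 = 0 then min (x.val + 1) (N - 1) else x.val - 1 := rfl

lemma I_even (hN2 : 2 ∣ N) {x : Fin N} (hx : x.val % 2 = 0) :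
    intervalInvolution N x = adv x 1 := by
  have h1 := x.isLt
  have h2 : x.val + 1 < N := by omega
  apply Fin.ext
  rw [I_val, val_adv x (show (1:ℕ) < N by omega), if_pos hx]
  split <;> omega

lemma I_odd {x : Fin N} (hx : x.val % 2 = 1) :
    (intervalInvolution N x).val = x.val - 1 := by
  rw [I_val, if_neg (by omega)]

lemma I_I (x : Fin N) : intervalInvolution N (intervalInvolution N x) = x := by
  have h1 := x.isLt
  apply Fin.ext
  rw [I_val, I_val]
  split_ifs <;> omega

lemma I_ne (hN2 : 2 ∣ N) (x : Fin N) : intervalInvolution N x ≠ x := by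
  intro h
  have h1 := x.isLt
  have h2 := congrArg Fin.val h
  rw [I_val] at h2
  split_ifs at h2 <;> omega

lemma val_adv_parity' (hN2 : 2 ∣ N) (a : Fin N) (j : ℕ) :
    (adv a j).val % 2 = (a.val + j) % 2 := by
  show ((a + (j : Fin N)).val) % 2 = _
  rw [Fin.val_add, Fin.val_natCast]
  have h1 : j % N % 2 = j % 2 := Nat.mod_mod_of_dvd j hN2
  have h2 : (a.val + j % N) % N % 2 = (a.val + j % N) % 2 := Nat.mod_mod_of_dvd _ hN2
  omega

lemma gammaI_even (hN2 : 2 ∣ N) {w : Fin N} (hw : w.val % 2 = 0) :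
    (finRotate N * intervalInvolution N) w = adv w 2 := by
  rw [Perm.mul_apply, I_even hN2 hw, gamma_adv, adv_adv]

lemma gammaI_odd {w : Fin N} (hw : w.val % 2 = 1) :
    (finRotate N * intervalInvolution N) w = w := by
  have h1 := w.isLt
  rw [Perm.mul_apply, gamma_adv]
  apply Fin.ext
  rw [val_adv _ (show (1:ℕ) < N by omega)]
  rw [I_odd hw]
  split <;> omega

lemma closure_stable {π ρ : Perm (Fin N)} {S : Set (Fin N)}
    (hπ : ∀ s, s ∈ S ↔ π s ∈ S) (hρ : ∀ s, s ∈ S ↔ ρ s ∈ S) :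
    ∀ g ∈ Subgroup.closure ({π, ρ} : Set (Perm (Fin N))), ∀ s, s ∈ S ↔ g s ∈ S := by
  intro g hg
  refine Subgroup.closure_induction ?_ ?_ ?_ ?_ hg
  · rintro x (rfl | hx)
    · exact hπ
    · rw [Set.mem_singleton_iff] at hx
      rw [hx]
      exact hρ
  · intro s
    simp
  · intro x y _ _ hpx hpy s
    rw [Perm.mul_apply]
    exact (hpy s).trans (hpx (y s))
  · intro x _ hpx s
    have := hpx (x⁻¹ s)
    rw [Perm.coe_inv, Equiv.apply_symm_apply] at this
    exact this.symm

lemma no_invariant {π ρ : Perm (Fin N)} (hJ : JointTrans π ρ) {S : Set (Fin N)}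
    (hπ : ∀ s, s ∈ S ↔ π s ∈ S) (hρ : ∀ s, s ∈ S ↔ ρ s ∈ S) {x y : Fin N}
    (hx : x ∈ S) (hy : y ∉ S) : False := by
  obtain ⟨g, hg, hgx⟩ := hJ x y
  exact hy (hgx ▸ (closure_stable hπ hρ g hg x).mp hx)

lemma cycleCount_gammaI {n : ℕ} (hN : N = 2 * n) (hn : 1 ≤ n) :
    cycleCount (finRotate N * intervalInvolution N) = n + 1 := by
  classical
  have hN2 : 2 ∣ N := ⟨n, hN⟩
  have hN0 : 0 < N := by omega
  set f := finRotate N * intervalInvolution N with hf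
  set Evens : Set (Fin N) := {z | z.val % 2 = 0} with hEvens
  have hfev : ∀ z ∈ Evens, f z ∈ Evens := by
    intro z hz
    have hz' : z.val % 2 = 0 := hz
    rw [hf, gammaI_even hN2 hz']
    show (adv z 2).val % 2 = 0
    rw [val_adv_parity' hN2]
    omega
  have horb_odd : ∀ z : Fin N, z.val % 2 = 1 → orbSet f z = {z} := by
    intro z hz
    apply subset_antisymm
    · intro y hy
      refine orb_closed (S := {z}) ?_ rfl hy
      rintro w rfl
      rw [hf, gammaI_odd hz]
      rfl
    · rintro y rfl
      exact mem_orbSet_self f y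
  have horb_even : ∀ z : Fin N, z.val % 2 = 0 → orbSet f z = Evens := by
    intro z hz
    apply subset_antisymm
    · intro y hy
      exact orb_closed hfev hz hy
    · intro w hw
      have hw' : w.val % 2 = 0 := hw
      have hpow : ∀ k : ℕ, (f ^ k) z = adv z (2 * k) := by
        intro k
        induction k with
        | zero => unfold adv; simp
        | succ m ih =>
            have hpar : (adv z (2 * m)).val % 2 = 0 := by
              rw [val_adv_parity' hN2]; omega
            rw [pow_succ', Perm.mul_apply, ih, hf, gammaI_even hN2 hpar, adv_adv,
              show 2 * m + 2 = 2 * (m + 1) by ring]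
      have hDpar : ofs z w % 2 = 0 := by
        have h1 := z.isLt; have h2 := w.isLt
        unfold ofs
        split <;> omega
      refine ⟨((ofs z w / 2 : ℕ) : ℤ), ?_⟩
      rw [zpow_natCast, hpow]
      have : 2 * (ofs z w / 2) = ofs z w := by omega
      rw [this, adv_ofs]
  have hdec : {O : Set (Fin N) | ∃ x, O = orbSet f x} =
      insert Evens ((fun z : Fin N => ({z} : Set (Fin N))) '' {z : Fin N | z.val % 2 = 1}) := by
    ext O
    rw [Set.mem_insert_iff]
    constructor
    · rintro ⟨x, rfl⟩
      rcases Nat.mod_two_eq_zero_or_one x.val with hx | hx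
      · exact Or.inl (horb_even x hx)
      · exact Or.inr ⟨x, hx, (horb_odd x hx).symm⟩
    · rintro (rfl | ⟨z, hz, rfl⟩)
      · exact ⟨⟨0, hN0⟩, (horb_even _ (by simp)).symm⟩
      · exact ⟨z, (horb_odd z hz).symm⟩
  rw [cycleCount_eq, hdec]
  have hnotmem : Evens ∉ (fun z : Fin N => ({z} : Set (Fin N))) '' {z : Fin N | z.val % 2 = 1} := by
    rintro ⟨z, hz, hEq⟩
    have h0 : (⟨0, hN0⟩ : Fin N) ∈ Evens := by
      show (0 : ℕ) % 2 = 0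
      rfl
    rw [← hEq] at h0
    have : (⟨0, hN0⟩ : Fin N) = z := h0
    have hzv : z.val % 2 = 1 := hz
    rw [← this] at hzv
    simp at hzv
  rw [Set.ncard_insert_of_notMem hnotmem (Set.toFinite _)]
  have himg : ((fun z : Fin N => ({z} : Set (Fin N))) '' {z : Fin N | z.val % 2 = 1}).ncard =
      ({z : Fin N | z.val % 2 = 1}).ncard :=
    Set.ncard_image_of_injective _ (fun a b h => Set.singleton_eq_singleton_iff.mp h)
  have hodds : ({z : Fin N | z.val % 2 = 1}).ncard = n := by
    have himg2 : {z : Fin N | z.val % 2 = 1} =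
        (fun k : Fin n => (⟨2 * k.val + 1, by have := k.isLt; omega⟩ : Fin N)) '' Set.univ := by
      ext z
      simp only [Set.mem_setOf_eq, Set.mem_image, Set.mem_univ, true_and]
      constructor
      · intro hz
        have h1 := z.isLt
        refine ⟨⟨z.val / 2, by omega⟩, ?_⟩
        apply Fin.ext
        simp only []
        omega
      · rintro ⟨k, rfl⟩
        simp only []
        omega
    rw [himg2, Set.ncard_image_of_injective _ (fun a b h => by
      have := congrArg Fin.val h
      simp only [] at this
      exact Fin.ext (by omega)), Set.ncard_univ]
    simp
  omega

lemma adv_zero (a : Fin N) : adv a 0 = a := by unfold adv; simp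

lemma adv_add_N (a : Fin N) (j : ℕ) : adv a (j + N) = adv a j := by
  rw [← adv_adv, adv_N]

def GoodPred (π : Perm (Fin N)) (x : Fin N) : Prop :=
  (x.val % 2 = 1 ∧ π x = adv x 1) ∨ (x.val % 2 = 0 ∧ π x = adv x (N - 1))

end Aux

open Aux in
theorem stmt_12 (n : ℕ) (hn : 1 ≤ n) :
    ∀ π : Equiv.Perm (Fin (2 * n)),
      ((∀ x, π (π x) = x ∧ π x ≠ x) ∧
        cycleCount π + cycleCount (π⁻¹ * finRotate (2 * n)) = 2 * n + 1 ∧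
        JointTrans π (intervalInvolution (2 * n))) ↔
      π = finRotate (2 * n) * intervalInvolution (2 * n) * (finRotate (2 * n))⁻¹ := by
  haveI : NeZero (2 * n) := ⟨by omega⟩
  intro π
  set γ : Perm (Fin (2 * n)) := finRotate (2 * n) with hγdef
  set I : Perm (Fin (2 * n)) := intervalInvolution (2 * n) with hIdef
  set σ : Perm (Fin (2 * n)) := γ * I * γ⁻¹ with hσdef
  have hN2 : 2 ∣ 2 * n := ⟨n, rfl⟩
  have hN0 : 0 < 2 * n := by omega
  have hσγ : σ * γ = γ * I := inv_mul_cancel_right (γ * I) γ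
  have hI2 : I * I = 1 := Equiv.ext fun x => by
    rw [Perm.mul_apply, hIdef]
    exact I_I x
  have hσ2 : σ * σ = 1 := by
    rw [hσdef]
    have h1 : γ * I * γ⁻¹ * (γ * I * γ⁻¹) = γ * (I * I) * γ⁻¹ := by group
    rw [h1, hI2, mul_one, mul_inv_cancel]
  have hsigmainv : ∀ x, σ (σ x) = x := fun x => by
    rw [← Perm.mul_apply, hσ2, Perm.one_apply]
  have hσfp : ∀ x, σ x ≠ x := by
    intro x h
    have h1 : σ x = γ (I (γ⁻¹ x)) := by
      rw [hσdef]
      rfl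
    have h2 : γ (γ⁻¹ x) = x := γ.apply_symm_apply x
    rw [h1] at h
    have h3 : I (γ⁻¹ x) = γ⁻¹ x := γ.injective (h.trans h2.symm)
    exact I_ne hN2 (γ⁻¹ x) h3
  have hσinv_eq : σ⁻¹ = σ := inv_eq_of_mul_eq_one_left hσ2
  -- σ at odd points
  have hσodd : ∀ p : Fin (2 * n), p.val % 2 = 1 → σ p = adv p 1 := by
    intro p hp
    have hpval := p.isLt
    set w : Fin (2 * n) := ⟨p.val - 1, by omega⟩ with hw
    have hwval : w.val = p.val - 1 := rfl
    have hwodd : w.val % 2 = 0 := by omega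
    have hγw : γ w = p := by
      rw [hγdef, gamma_adv]
      apply Fin.ext
      rw [val_adv _ (show (1:ℕ) < 2 * n by omega)]
      split <;> omega
    have h1 : σ (γ w) = (γ * I) w := by rw [← Perm.mul_apply, hσγ]
    rw [hγw] at h1
    rw [h1, hγdef, hIdef, gammaI_even hN2 hwodd, ← hγw, hγdef, gamma_adv, adv_adv]
  constructor
  · -- forward direction
    rintro ⟨hinvfp, hcc, hJ⟩
    have hπinv : ∀ x, π (π x) = x := fun x => (hinvfp x).1
    have hπfp : ∀ x, π x ≠ x := fun x => (hinvfp x).2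
    have hππ : π * π = 1 := Equiv.ext fun x => by
      rw [Perm.mul_apply, hπinv, Perm.one_apply]
    have hπi : π⁻¹ = π := inv_eq_of_mul_eq_one_left hππ
    have hccπ : cycleCount π = n := by
      have := cycleCount_involution π hπinv hπfp
      omega
    have hccβ : cycleCount (π * γ) = n + 1 := by
      rw [← hπi]
      omega
    rcases eq_or_lt_of_le hn with hn1 | hn2
    · -- n = 1
      ext x
      have h1 : x.val < 2 * n := x.isLt
      have h2 : (π x).val < 2 * n := (π x).isLt
      have h3 : (σ x).val < 2 * n := (σ x).isLt
      have h4 : (π x).val ≠ x.val := fun h => hπfp x (Fin.ext h)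
      have h5 : (σ x).val ≠ x.val := fun h => hσfp x (Fin.ext h)
      omega
    · -- n ≥ 2
      have hNC : ∀ a c : Fin (2 * n), 0 < ofs a c → ofs a c < ofs a (π a) →
          0 < ofs a (π c) ∧ ofs a (π c) < ofs a (π a) := by
        intro a c h1 h2
        by_contra h
        have := cross_bound rfl hn2 hπinv hπfp h1 h2 h
        rw [hccβ] at this
        omega
      have hnoIkey : ∀ x : Fin (2 * n), x.val % 2 = 0 → π x = I x → False := by
        intro x hx h
        set S : Set (Fin (2 * n)) := {x, adv x 1} with hS
        have hIx : I x = adv x 1 := by rw [hIdef]; exact I_even hN2 hx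
        have hπS : ∀ s ∈ S, π s ∈ S := by
          rintro s (rfl | hs)
          · rw [h, hIx]; exact Or.inr rfl
          · rw [Set.mem_singleton_iff] at hs
            subst hs
            rw [← hIx, ← h, hπinv]
            exact Or.inl rfl
        have hIS : ∀ s ∈ S, I s ∈ S := by
          rintro s (rfl | hs)
          · rw [hIx]; exact Or.inr rfl
          · rw [Set.mem_singleton_iff] at hs
            subst hs
            rw [← hIx, hIdef]
            rw [show intervalInvolution (2*n) (intervalInvolution (2*n) x) = x from I_I x]
            exact Or.inl rfl
        have hπiff : ∀ s, s ∈ S ↔ π s ∈ S := fun s =>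
          ⟨fun hs => hπS s hs, fun hs => by
            have := hπS _ hs
            rwa [hπinv] at this⟩
        have hIiff : ∀ s, s ∈ S ↔ I s ∈ S := fun s =>
          ⟨fun hs => hIS s hs, fun hs => by
            have := hIS _ hs
            rw [hIdef] at this
            rwa [I_I] at this⟩
        have hy : adv x 2 ∉ S := by
          rintro (h2 | h2)
          · have := ofs_adv x (show 2 < 2*n by omega)
            rw [h2, ofs_self] at this
            omega
          · rw [Set.mem_singleton_iff] at h2
            have e1 := ofs_adv x (show 2 < 2*n by omega)
            have e2 := ofs_adv x (show 1 < 2*n by omega)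
            rw [h2] at e1
            omega
        exact no_invariant hJ hπiff hIiff (Or.inl rfl) hy
      have hnoI : ∀ x : Fin (2 * n), π x ≠ I x := by
        intro x h
        rcases Nat.mod_two_eq_zero_or_one x.val with hx | hx
        · exact hnoIkey x hx h
        · refine hnoIkey (I x) ?_ ?_
          · rw [hIdef, I_odd hx]
            have := x.isLt
            omega
          · show π (I x) = I (I x)
            rw [hIdef, show intervalInvolution (2*n) (intervalInvolution (2*n) x) = x from I_I x,
              ← hIdef, ← h, hπinv]
      have hGoodall : ∀ x, GoodPred π x := by
        by_contra hB
        push_neg at hB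
        obtain ⟨xb, hxb⟩ := hB
        have hGoodπ : ∀ x : Fin (2 * n), GoodPred π x → GoodPred π (π x) := by
          intro x hx
          rcases hx with ⟨h1, h2⟩ | ⟨h1, h2⟩
          · refine Or.inr ⟨?_, ?_⟩
            · rw [h2, val_adv_parity' hN2]
              omega
            · rw [hπinv x, h2, adv_adv, show 1 + (2 * n - 1) = 2 * n by omega, adv_N]
          · refine Or.inl ⟨?_, ?_⟩
            · rw [h2, val_adv_parity' hN2]
              omega
            · rw [hπinv x, h2, adv_adv, show (2 * n - 1) + 1 = 2 * n by omega, adv_N]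
        have hbadπ : ∀ x, ¬ GoodPred π x → ¬ GoodPred π (π x) := by
          intro x hx hG
          apply hx
          have := hGoodπ _ hG
          rwa [hπinv] at this
        set M : Set ℕ := {m | ∃ x, ¬ GoodPred π x ∧ m = ofs x (π x)} with hM
        have hMne : M.Nonempty := ⟨ofs xb (π xb), xb, hxb, rfl⟩
        obtain ⟨x0, hbad, hleq⟩ := Nat.sInf_mem hMne
        have hmin : ∀ y, ¬ GoodPred π y → sInf M ≤ ofs y (π y) := fun y hy =>
          Nat.sInf_le ⟨y, hy, rfl⟩
        set l := ofs x0 (π x0) with hldef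
        have hπx0 : x0 ≠ π x0 := fun h => hπfp x0 h.symm
        have hlpos : 0 < l := ofs_pos hπx0
        have hmin2 : l ≤ ofs (π x0) x0 := by
          have h1 := hmin (π x0) (hbadπ x0 hbad)
          rw [hπinv] at h1
          omega
        have hminl : ∀ y, ¬ GoodPred π y → l ≤ ofs y (π y) := by
          intro y hy
          have := hmin y hy
          omega
        have hminr : ∀ y, ¬ GoodPred π y → l ≤ ofs (π y) y := by
          intro y hy
          have := hmin (π y) (hbadπ y hy)
          rw [hπinv] at this
          omega
        have hsum := ofs_sum hπx0
        have hln : l ≤ n := by omega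
        have hl1 : l ≠ 1 := by
          intro h1
          have hπ1 : π x0 = adv x0 1 := by
            rw [← h1, hldef, adv_ofs]
          rcases Nat.mod_two_eq_zero_or_one x0.val with hx | hx
          · exact hnoIkey x0 hx (by rw [hπ1, hIdef, I_even hN2 hx])
          · exact hbad (Or.inl ⟨hx, hπ1⟩)
        have hl2 : 2 ≤ l := by omega
        have hπadv : π x0 = adv x0 l := by rw [hldef, adv_ofs]
        have hintGood : ∀ j, 0 < j → j < l → GoodPred π (adv x0 j) := by
          intro j hj0 hjl
          by_contra hg
          have hofsj : ofs x0 (adv x0 j) = j := ofs_adv x0 (by omega)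
          obtain ⟨hv1, hv2⟩ := hNC x0 (adv x0 j) (by omega) (by rw [hofsj]; omega)
          set v := ofs x0 (π (adv x0 j)) with hv
          have hπy : π (adv x0 j) = adv x0 v := by rw [hv, adv_ofs]
          have hne : j ≠ v := by
            intro h
            apply hπfp (adv x0 j)
            rw [hπy, ← h]
          rcases le_or_gt j v with hc | hc
          · have h1 : ofs (adv x0 j) (π (adv x0 j)) = v - j := by
              rw [hπy]
              exact ofs_adv_adv_le x0 hc (by omega)
            have h2 := hminl _ hg
            omega
          · have h1 : ofs (π (adv x0 j)) (adv x0 j) = j - v := by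
              rw [hπy]
              exact ofs_adv_adv_le x0 (le_of_lt hc) (by omega)
            have h2 := hminr _ hg
            omega
        have hC : ∀ k, 2 * k + 1 < l → π (adv x0 (2 * k + 1)) = adv x0 (2 * k + 2) := by
          intro k
          induction k using Nat.strong_induction_on with
          | _ k ih =>
            intro hk
            rcases hintGood (2 * k + 1) (by omega) hk with ⟨_, h2⟩ | ⟨hpar, h2⟩
            · rw [h2, adv_adv]
            · exfalso
              rw [adv_adv, show (2 * k + 1) + (2 * n - 1) = 2 * k + 2 * n by omega,
                adv_add_N] at h2
              rcases Nat.eq_zero_or_pos k with rfl | hkpos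
              · rw [show 2 * 0 = 0 from rfl, adv_zero] at h2
                have h4 : adv x0 (2 * 0 + 1) = π x0 := π.injective (by rw [h2, hπinv])
                have e1 := ofs_adv x0 (show 2 * 0 + 1 < 2 * n by omega)
                rw [h4, ← hldef] at e1
                omega
              · have hih := ih (k - 1) (by omega) (by omega)
                rw [show 2 * (k - 1) + 1 = 2 * k - 1 by omega,
                  show 2 * (k - 1) + 2 = 2 * k by omega] at hih
                have h4 : adv x0 (2 * k - 1) = adv x0 (2 * k + 1) := by
                  apply π.injective
                  rw [hih, h2]
                have e1 := ofs_adv x0 (show 2 * k - 1 < 2 * n by omega)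
                have e2 := ofs_adv x0 (show 2 * k + 1 < 2 * n by omega)
                rw [h4] at e1
                omega
        have hlodd : l % 2 = 1 := by
          rcases Nat.mod_two_eq_zero_or_one l with hev | hod
          · exfalso
            have h3 := hC ((l - 2) / 2) (by omega)
            rw [show 2 * ((l - 2) / 2) + 1 = l - 1 by omega,
              show 2 * ((l - 2) / 2) + 2 = l by omega, ← hπadv] at h3
            have h4 : adv x0 (l - 1) = x0 := π.injective h3
            have e1 := ofs_adv x0 (show l - 1 < 2 * n by omega)
            rw [h4, ofs_self] at e1
            omega
          · exact hod
        have hx0even : x0.val % 2 = 0 := by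
          have h3 := hC 0 (by omega)
          rcases hintGood 1 (by omega) (by omega) with ⟨hpar, _⟩ | ⟨_, h2⟩
          · rw [val_adv_parity' hN2] at hpar
            omega
          · exfalso
            rw [adv_adv, show 1 + (2 * n - 1) = 2 * n by omega, adv_N] at h2
            rw [show 2 * 0 + 1 = 1 from rfl, show 2 * 0 + 2 = 2 from rfl] at h3
            rw [h3] at h2
            have e1 := ofs_adv x0 (show (2:ℕ) < 2 * n by omega)
            rw [h2, ofs_self] at e1
            omega
        have hfull : ∀ j, 0 < j → j < l →
            (j % 2 = 1 → π (adv x0 j) = adv x0 (j + 1)) ∧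
            (j % 2 = 0 → π (adv x0 j) = adv x0 (j - 1)) := by
          intro j hj0 hjl
          constructor
          · intro hodd
            have h3 := hC ((j - 1) / 2) (by omega)
            rwa [show 2 * ((j - 1) / 2) + 1 = j by omega,
              show 2 * ((j - 1) / 2) + 2 = j + 1 by omega] at h3
          · intro heven
            have h3 := hC ((j - 2) / 2) (by omega)
            rw [show 2 * ((j - 2) / 2) + 1 = j - 1 by omega,
              show 2 * ((j - 2) / 2) + 2 = j by omega] at h3
            rw [← h3, hπinv]
        set S : Set (Fin (2 * n)) := {z | ofs x0 z ≤ l} with hS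
        have hSπ : ∀ z ∈ S, π z ∈ S := by
          intro z hz
          have hj : ofs x0 z ≤ l := hz
          have hzadv : z = adv x0 (ofs x0 z) := (adv_ofs x0 z).symm
          rcases Nat.eq_zero_or_pos (ofs x0 z) with h0 | h0
          · have hzx0 : z = x0 := by rw [hzadv, h0, adv_zero]
            rw [hzx0, hπadv]
            show ofs x0 (adv x0 l) ≤ l
            rw [ofs_adv x0 (by omega)]
          · rcases eq_or_lt_of_le hj with hl' | hl'
            · have hzπ : z = π x0 := by rw [hzadv, hl', ← hπadv]
              rw [hzπ, hπinv]
              show ofs x0 x0 ≤ l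
              rw [ofs_self]
              omega
            · obtain ⟨hcase1, hcase2⟩ := hfull (ofs x0 z) h0 hl'
              rcases Nat.mod_two_eq_zero_or_one (ofs x0 z) with he | ho
              · have h3 := hcase2 he
                rw [← hzadv] at h3
                show ofs x0 (π z) ≤ l
                rw [h3, ofs_adv x0 (by omega)]
                omega
              · have h3 := hcase1 ho
                rw [← hzadv] at h3
                show ofs x0 (π z) ≤ l
                rw [h3, ofs_adv x0 (by omega)]
                omega
        have hSI : ∀ z ∈ S, I z ∈ S := by
          intro z hz
          have hj : ofs x0 z ≤ l := hz
          have hjN : ofs x0 z < 2 * n := by omega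
          have hzadv : z = adv x0 (ofs x0 z) := (adv_ofs x0 z).symm
          have hzpar : z.val % 2 = (x0.val + ofs x0 z) % 2 := by
            conv_lhs => rw [hzadv]
            rw [val_adv_parity' hN2]
          rcases Nat.mod_two_eq_zero_or_one (ofs x0 z) with he | ho
          · have hze : z.val % 2 = 0 := by omega
            have hIz : I z = adv x0 (ofs x0 z + 1) := by
              rw [hIdef, I_even hN2 hze]
              conv_lhs => rw [hzadv]
              rw [adv_adv]
            show ofs x0 (I z) ≤ l
            rw [hIz, ofs_adv x0 (by omega)]
            omega
          · have hzo : z.val % 2 = 1 := by omega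
            have hIz : I z = adv x0 (ofs x0 z - 1) := by
              apply Fin.ext
              rw [show (I z).val = z.val - 1 from by rw [hIdef]; exact I_odd hzo]
              rw [val_adv x0 (by omega)]
              have hzval : z.val = (adv x0 (ofs x0 z)).val := by rw [← hzadv]
              rw [val_adv x0 hjN] at hzval
              have hx0lt := x0.isLt
              split at hzval <;> split <;> omega
            show ofs x0 (I z) ≤ l
            rw [hIz, ofs_adv x0 (by omega)]
            omega
        have hπiff : ∀ s, s ∈ S ↔ π s ∈ S := fun s =>
          ⟨fun hs => hSπ s hs, fun hs => by
            have := hSπ _ hs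
            rwa [hπinv] at this⟩
        have hIiff : ∀ s, s ∈ S ↔ I s ∈ S := fun s =>
          ⟨fun hs => hSI s hs, fun hs => by
            have := hSI _ hs
            rw [hIdef] at this
            rwa [I_I] at this⟩
        have hx0S : x0 ∈ S := by
          show ofs x0 x0 ≤ l
          rw [ofs_self]
          omega
        have hyS : adv x0 (l + 1) ∉ S := by
          intro hmem
          have h5 : ofs x0 (adv x0 (l + 1)) ≤ l := hmem
          rw [ofs_adv x0 (by omega)] at h5
          omega
        exact no_invariant hJ hπiff hIiff hx0S hyS
      have hfin : π * γ = γ * I := by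
        ext w
        rw [Perm.mul_apply, hγdef, gamma_adv]
        rcases Nat.mod_two_eq_zero_or_one w.val with hw | hw
        · rw [hIdef, gammaI_even hN2 hw]
          have hpar : (adv w 1).val % 2 = 1 := by
            rw [val_adv_parity' hN2]
            omega
          rcases hGoodall (adv w 1) with ⟨_, h2⟩ | ⟨h1, _⟩
          · rw [h2, adv_adv]
          · omega
        · rw [hIdef, gammaI_odd hw]
          have hpar : (adv w 1).val % 2 = 0 := by
            rw [val_adv_parity' hN2]
            omega
          rcases hGoodall (adv w 1) with ⟨h1, _⟩ | ⟨_, h2⟩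
          · omega
          · rw [h2, adv_adv, show 1 + (2 * n - 1) = 2 * n by omega, adv_N]
      show π = γ * I * γ⁻¹
      exact eq_mul_inv_iff_mul_eq.mpr hfin
  · -- backward direction
    intro hπ
    subst hπ
    refine ⟨fun x => ⟨hsigmainv x, hσfp x⟩, ?_, ?_⟩
    · have h1 : cycleCount σ = n := by
        have := cycleCount_involution σ hsigmainv hσfp
        omega
      have h2 : cycleCount (σ⁻¹ * γ) = n + 1 := by
        rw [hσinv_eq]
        have : σ * γ = γ * I := hσγ
        rw [this, hγdef, hIdef]
        exact cycleCount_gammaI rfl hn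
      omega
    · -- joint transitivity
      set zero : Fin (2 * n) := ⟨0, hN0⟩ with hzero
      have hzv : zero.val = 0 := rfl
      have hreach : ∀ k, k < 2 * n →
          ∃ g ∈ Subgroup.closure ({σ, I} : Set (Perm (Fin (2 * n)))),
            g zero = adv zero k := by
        intro k
        induction k with
        | zero =>
            intro hk
            refine ⟨1, one_mem _, ?_⟩
            rw [adv_zero, Perm.one_apply]
        | succ m ih =>
            intro hk
            obtain ⟨g, hg, hg0⟩ := ih (by omega)
            have hpar : (adv zero m).val % 2 = m % 2 := by
              rw [val_adv_parity' hN2, hzv]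
              omega
            rcases Nat.mod_two_eq_zero_or_one m with hm | hm
            · refine ⟨I * g, mul_mem (Subgroup.subset_closure (Or.inr rfl)) hg, ?_⟩
              rw [Perm.mul_apply, hg0, hIdef, I_even hN2 (by omega), adv_adv]
            · refine ⟨σ * g, mul_mem (Subgroup.subset_closure (Or.inl rfl)) hg, ?_⟩
              rw [Perm.mul_apply, hg0, hσodd _ (by omega), adv_adv]
      intro x y
      have hadv : ∀ z : Fin (2 * n), adv zero z.val = z := by
        intro z
        apply Fin.ext
        rw [val_adv _ z.isLt, hzv]
        have := z.isLt
        split <;> omega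
      obtain ⟨gx, hgx, hgx0⟩ := hreach x.val x.isLt
      obtain ⟨gy, hgy, hgy0⟩ := hreach y.val y.isLt
      rw [hadv] at hgx0 hgy0
      refine ⟨gy * gx⁻¹, mul_mem hgy (inv_mem hgx), ?_⟩
      have hx0 : gx⁻¹ x = zero := by
        rw [← hgx0, Perm.coe_inv, Equiv.symm_apply_apply]
      rw [Perm.mul_apply, hx0, hgy0]
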